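/- Let A be an n×n complex matrix such that every eigenvalue of A has negative real part, and let C be a 1×n complex row vector with A + A* + C*C = 0. Let φ be a finite Blaschke product of degree strictly less than n, and let x be a nonzero vector in ℂⁿ satisfying x = φ̃(−A)*φ̃(−A)x. Then φ̃(−A)x ≠ 0, and for every complex s with Re(s) > 0, the scalar identity C(sI − A)^{-1}x = φ(s)·C(sI − A)^{-1}φ̃(−A)x holds. -/

import Mathlib

open Matrix

/-- Evaluation of the finite Blaschke product with data `(ρ, α)` at a complex
number `s`: `ρ * ∏ k (s + conj (α k)) / (s - α k)`. -/
noncomputable def blaschkeEval {d : ℕ} (ρ : ℂ) (α : Fin d → ℂ) (s : ℂ) : ℂ :=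
  ρ * ∏ k : Fin d, (s + starRingEnd ℂ (α k)) / (s - α k)

/-- Evaluation of the finite Blaschke product with data `(ρ, α)` at a square
complex matrix `M`: `ρ • ∏ k (M + conj (α k) • 1) * (M - α k • 1)⁻¹`. -/
noncomputable def blaschkeEvalM {n d : ℕ} (ρ : ℂ) (α : Fin d → ℂ)
    (M : Matrix (Fin n) (Fin n) ℂ) : Matrix (Fin n) (Fin n) ℂ :=
  ρ • (List.ofFn fun k : Fin d =>
      (M + (starRingEnd ℂ (α k)) • (1 : Matrix (Fin n) (Fin n) ℂ)) *
        (M - (α k) • (1 : Matrix (Fin n) (Fin n) ℂ))⁻¹).prod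

/-- For a Blaschke product `b` with data `(ρ, α)`, the function
`b̃(s) = conj (b (conj s))` is the Blaschke product with data
`(conj ρ, conj ∘ α)`.  This is its evaluation at a square matrix. -/
noncomputable def blaschkeTildeEvalM {n d : ℕ} (ρ : ℂ) (α : Fin d → ℂ)
    (M : Matrix (Fin n) (Fin n) ℂ) : Matrix (Fin n) (Fin n) ℂ :=
  blaschkeEvalM (starRingEnd ℂ ρ) (fun k => starRingEnd ℂ (α k)) M

namespace Stmt8Aux

noncomputable def nsq {m : ℕ} (w : Matrix (Fin m) (Fin 1) ℂ) : ℝ :=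
  ∑ i, Complex.normSq (w i 0)

lemma nsq_nonneg {m : ℕ} (w : Matrix (Fin m) (Fin 1) ℂ) : 0 ≤ nsq w :=
  Finset.sum_nonneg fun i _ => Complex.normSq_nonneg _

lemma nsq_eq_zero_iff {m : ℕ} (w : Matrix (Fin m) (Fin 1) ℂ) : nsq w = 0 ↔ w = 0 := by
  constructor
  · intro h
    ext i j
    have h2 := (Finset.sum_eq_zero_iff_of_nonneg
      (fun i _ => Complex.normSq_nonneg (w i 0))).mp h i (Finset.mem_univ i)
    have hj : j = 0 := Subsingleton.elim _ _
    subst hj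
    simpa using h2
  · intro h; simp [h, nsq]

lemma entry_eq_nsq {m : ℕ} (w : Matrix (Fin m) (Fin 1) ℂ) :
    (wᴴ * w) 0 0 = (nsq w : ℂ) := by
  rw [Matrix.mul_apply]
  simp only [conjTranspose_apply, nsq, Complex.ofReal_sum]
  refine Finset.sum_congr rfl fun i _ => ?_
  simp [Complex.normSq_eq_conj_mul_self, RCLike.star_def]

variable {n : ℕ}

lemma key_matrix (A : Matrix (Fin n) (Fin n) ℂ) (a : ℂ) :
    (-A + a • 1)ᴴ * (-A + a • 1)
      = (-A - (starRingEnd ℂ a) • 1)ᴴ * (-A - (starRingEnd ℂ a) • 1)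
        - (a + starRingEnd ℂ a) • (A + Aᴴ) := by
  simp only [conjTranspose_add, conjTranspose_sub, conjTranspose_neg, conjTranspose_smul,
    conjTranspose_one, Matrix.add_mul, Matrix.sub_mul, Matrix.mul_add, Matrix.mul_sub,
    Matrix.neg_mul, Matrix.mul_neg, smul_mul_assoc, mul_smul_comm, Matrix.mul_one,
    Matrix.one_mul, Complex.star_def, Complex.conj_conj]
  module

lemma energy (A : Matrix (Fin n) (Fin n) ℂ) (C : Matrix (Fin 1) (Fin n) ℂ)
    (hdiss : A + Aᴴ + Cᴴ * C = 0) (a : ℂ) (v : Matrix (Fin n) (Fin 1) ℂ) :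
    nsq ((-A + a • 1) * v)
      = nsq ((-A - (starRingEnd ℂ a) • 1) * v) + 2 * a.re * nsq (C * v) := by
  have hA : A + Aᴴ = -(Cᴴ * C) := eq_neg_of_add_eq_zero_left hdiss
  have key := key_matrix A a
  rw [hA, smul_neg, sub_neg_eq_add] at key
  have h1 : ((-A + a • 1) * v)ᴴ * ((-A + a • 1) * v)
      = ((-A - (starRingEnd ℂ a) • 1) * v)ᴴ * ((-A - (starRingEnd ℂ a) • 1) * v)
        + (a + starRingEnd ℂ a) • ((C * v)ᴴ * (C * v)) := by
    calc ((-A + a • 1) * v)ᴴ * ((-A + a • 1) * v)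
        = vᴴ * ((-A + a • 1)ᴴ * (-A + a • 1)) * v := by
          simp only [conjTranspose_mul, Matrix.mul_assoc]
      _ = vᴴ * ((-A - (starRingEnd ℂ a) • 1)ᴴ * (-A - (starRingEnd ℂ a) • 1)
            + (a + starRingEnd ℂ a) • (Cᴴ * C)) * v := by rw [key]
      _ = _ := by
          simp only [Matrix.mul_add, Matrix.add_mul, mul_smul_comm, smul_mul_assoc,
            conjTranspose_mul, Matrix.smul_mul, Matrix.mul_smul, Matrix.mul_assoc]
  have h2 := congrArg (fun M => M 0 0) h1
  simp only [Matrix.add_apply, Matrix.smul_apply, entry_eq_nsq, smul_eq_mul] at h2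
  have ha : a + starRingEnd ℂ a = ((2 * a.re : ℝ) : ℂ) := by
    rw [Complex.add_conj]
  rw [ha] at h2
  exact_mod_cast h2
  

lemma unit_det (A : Matrix (Fin n) (Fin n) ℂ)
    (hstab : ∀ z ∈ spectrum ℂ A, z.re < 0) (z : ℂ) (hz : 0 ≤ z.re) :
    IsUnit (z • (1 : Matrix (Fin n) (Fin n) ℂ) - A).det := by
  by_contra h
  have hu : ¬ IsUnit (z • (1 : Matrix (Fin n) (Fin n) ℂ) - A) :=
    fun hu => h ((Matrix.isUnit_iff_isUnit_det _).mp hu)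
  have hz' : z ∈ spectrum ℂ A := by
    rw [spectrum.mem_iff, Algebra.algebraMap_eq_smul_one]
    exact hu
  exact absurd (hstab z hz') (not_lt.mpr hz)

/-- The single Blaschke factor at `-A`. -/
noncomputable def Fm (A : Matrix (Fin n) (Fin n) ℂ) (a : ℂ) :
    Matrix (Fin n) (Fin n) ℂ :=
  (-A + a • 1) * (-A - (starRingEnd ℂ a) • 1)⁻¹

lemma shift_eq (A : Matrix (Fin n) (Fin n) ℂ) (a : ℂ) :
    -A - (starRingEnd ℂ a) • (1 : Matrix (Fin n) (Fin n) ℂ)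
      = (-(starRingEnd ℂ a)) • (1 : Matrix (Fin n) (Fin n) ℂ) - A := by
  rw [neg_smul]; abel

lemma unit_det_shift (A : Matrix (Fin n) (Fin n) ℂ)
    (hstab : ∀ z ∈ spectrum ℂ A, z.re < 0) (a : ℂ) (ha : a.re < 0) :
    IsUnit (-A - (starRingEnd ℂ a) • (1 : Matrix (Fin n) (Fin n) ℂ)).det := by
  rw [shift_eq]
  refine unit_det A hstab _ ?_
  simp only [Complex.neg_re, Complex.conj_re]
  linarith

lemma factor_y (A : Matrix (Fin n) (Fin n) ℂ)
    (hstab : ∀ z ∈ spectrum ℂ A, z.re < 0) (a : ℂ) (ha : a.re < 0)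
    (y : Matrix (Fin n) (Fin 1) ℂ) :
    (-A - (starRingEnd ℂ a) • 1) * ((-A - (starRingEnd ℂ a) • 1)⁻¹ * y) = y := by
  rw [← Matrix.mul_assoc, Matrix.mul_nonsing_inv _ (unit_det_shift A hstab a ha),
    Matrix.one_mul]

lemma Fm_apply (A : Matrix (Fin n) (Fin n) ℂ) (a : ℂ)
    (y : Matrix (Fin n) (Fin 1) ℂ) :
    Fm A a * y = (-A + a • 1) * ((-A - (starRingEnd ℂ a) • 1)⁻¹ * y) := by
  rw [Fm, Matrix.mul_assoc]

lemma step_energy (A : Matrix (Fin n) (Fin n) ℂ)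
    (hstab : ∀ z ∈ spectrum ℂ A, z.re < 0)
    (C : Matrix (Fin 1) (Fin n) ℂ) (hdiss : A + Aᴴ + Cᴴ * C = 0)
    (a : ℂ) (ha : a.re < 0) (y : Matrix (Fin n) (Fin 1) ℂ) :
    nsq (Fm A a * y)
      = nsq y + 2 * a.re * nsq (C * ((-A - (starRingEnd ℂ a) • 1)⁻¹ * y)) := by
  have h := energy A C hdiss a ((-A - (starRingEnd ℂ a) • 1)⁻¹ * y)
  rw [factor_y A hstab a ha] at h
  rw [Fm_apply]
  exact h

lemma step_contract (A : Matrix (Fin n) (Fin n) ℂ)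
    (hstab : ∀ z ∈ spectrum ℂ A, z.re < 0)
    (C : Matrix (Fin 1) (Fin n) ℂ) (hdiss : A + Aᴴ + Cᴴ * C = 0)
    (a : ℂ) (ha : a.re < 0) (y : Matrix (Fin n) (Fin 1) ℂ) :
    nsq (Fm A a * y) ≤ nsq y := by
  rw [step_energy A hstab C hdiss a ha]
  nlinarith [nsq_nonneg (C * ((-A - (starRingEnd ℂ a) • 1)⁻¹ * y))]

lemma contraction (A : Matrix (Fin n) (Fin n) ℂ)
    (hstab : ∀ z ∈ spectrum ℂ A, z.re < 0)
    (C : Matrix (Fin 1) (Fin n) ℂ) (hdiss : A + Aᴴ + Cᴴ * C = 0) :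
    ∀ (l : List ℂ), (∀ a ∈ l, a.re < 0) → ∀ x : Matrix (Fin n) (Fin 1) ℂ,
      nsq ((l.map (Fm A)).prod * x) ≤ nsq x := by
  intro l
  induction l with
  | nil => intro _ x; simp
  | cons a t ih =>
    intro hl x
    have ha : a.re < 0 := hl a List.mem_cons_self
    have ht : ∀ b ∈ t, b.re < 0 := fun b hb => hl b (List.mem_cons_of_mem a hb)
    calc nsq (((a :: t).map (Fm A)).prod * x)
        = nsq (Fm A a * ((t.map (Fm A)).prod * x)) := by
          rw [List.map_cons, List.prod_cons, Matrix.mul_assoc]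
      _ ≤ nsq ((t.map (Fm A)).prod * x) := step_contract A hstab C hdiss a ha _
      _ ≤ nsq x := ih ht x

lemma step_scalar (A : Matrix (Fin n) (Fin n) ℂ)
    (hstab : ∀ z ∈ spectrum ℂ A, z.re < 0)
    (C : Matrix (Fin 1) (Fin n) ℂ)
    (a s : ℂ) (ha : a.re < 0) (hs : 0 < s.re)
    (y : Matrix (Fin n) (Fin 1) ℂ)
    (hC : C * ((-A - (starRingEnd ℂ a) • 1)⁻¹ * y) = 0) :
    C * (s • (1 : Matrix (Fin n) (Fin n) ℂ) - A)⁻¹ * y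
      = ((s + starRingEnd ℂ a) / (s - a)) •
          (C * (s • (1 : Matrix (Fin n) (Fin n) ℂ) - A)⁻¹ * (Fm A a * y)) := by
  set v := (-A - (starRingEnd ℂ a) • 1)⁻¹ * y with hv
  set R := (s • (1 : Matrix (Fin n) (Fin n) ℂ) - A)⁻¹ with hR
  have hRdet : IsUnit (s • (1 : Matrix (Fin n) (Fin n) ℂ) - A).det :=
    unit_det A hstab s (le_of_lt hs)
  have hRinv : R * (s • (1 : Matrix (Fin n) (Fin n) ℂ) - A) = 1 :=
    Matrix.nonsing_inv_mul _ hRdet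
  have hy : y = (-A - (starRingEnd ℂ a) • 1) * v := (factor_y A hstab a ha y).symm
  have hFy : Fm A a * y = (-A + a • 1) * v := Fm_apply A a y
  have e1 : -A - (starRingEnd ℂ a) • (1 : Matrix (Fin n) (Fin n) ℂ)
      = (s • (1 : Matrix (Fin n) (Fin n) ℂ) - A) - (s + starRingEnd ℂ a) • 1 := by
    rw [add_smul]; abel
  have e2 : -A + a • (1 : Matrix (Fin n) (Fin n) ℂ)
      = (s • (1 : Matrix (Fin n) (Fin n) ℂ) - A) - (s - a) • 1 := by
    rw [sub_smul]; abel
  have key : ∀ c : ℂ,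
      C * R * (((s • (1 : Matrix (Fin n) (Fin n) ℂ) - A) - c • 1) * v)
        = - c • (C * R * v) := by
    intro c
    rw [Matrix.sub_mul, Matrix.mul_sub, Matrix.smul_mul, Matrix.one_mul,
      Matrix.mul_smul, Matrix.mul_assoc, Matrix.mul_assoc]
    rw [← Matrix.mul_assoc R, hRinv, Matrix.one_mul]
    rw [← Matrix.mul_assoc C R v]
    rw [Matrix.mul_assoc, hC, zero_sub, neg_smul]
  have h1 : C * R * y = -(s + starRingEnd ℂ a) • (C * R * v) := by
    rw [hy, e1]; exact key _
  have h2 : C * R * (Fm A a * y) = -(s - a) • (C * R * v) := by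
    rw [hFy, e2]; exact key _
  have hsa : s - a ≠ 0 := by
    intro h
    have : (s - a).re = 0 := by rw [h]; simp
    simp only [Complex.sub_re] at this
    linarith
  rw [h1, h2, smul_smul]
  congr 1
  field_simp

lemma main (A : Matrix (Fin n) (Fin n) ℂ)
    (hstab : ∀ z ∈ spectrum ℂ A, z.re < 0)
    (C : Matrix (Fin 1) (Fin n) ℂ) (hdiss : A + Aᴴ + Cᴴ * C = 0) :
    ∀ (l : List ℂ), (∀ a ∈ l, a.re < 0) → ∀ x : Matrix (Fin n) (Fin 1) ℂ,
      nsq ((l.map (Fm A)).prod * x) = nsq x →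
      ∀ s : ℂ, 0 < s.re →
        C * (s • (1 : Matrix (Fin n) (Fin n) ℂ) - A)⁻¹ * x
          = (l.map (fun a => (s + starRingEnd ℂ a) / (s - a))).prod •
              (C * (s • (1 : Matrix (Fin n) (Fin n) ℂ) - A)⁻¹ *
                ((l.map (Fm A)).prod * x)) := by
  intro l
  induction l with
  | nil => intro _ x _ s _; simp
  | cons a t ih =>
    intro hl x hnorm s hs
    have ha : a.re < 0 := hl a List.mem_cons_self
    have ht : ∀ b ∈ t, b.re < 0 := fun b hb => hl b (List.mem_cons_of_mem a hb)
    set y := (t.map (Fm A)).prod * x with hy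
    have hprod : ((a :: t).map (Fm A)).prod * x = Fm A a * y := by
      rw [List.map_cons, List.prod_cons, Matrix.mul_assoc]
    rw [hprod] at hnorm
    have hyx : nsq y ≤ nsq x := contraction A hstab C hdiss t ht x
    have hFy : nsq (Fm A a * y) ≤ nsq y := step_contract A hstab C hdiss a ha y
    have h1 : nsq y = nsq x := le_antisymm hyx (hnorm ▸ hFy)
    have h2 : nsq (Fm A a * y) = nsq y := by rw [hnorm, h1]
    have hCv : C * ((-A - (starRingEnd ℂ a) • 1)⁻¹ * y) = 0 := by
      have he := step_energy A hstab C hdiss a ha y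
      rw [h2] at he
      have h3 : 2 * a.re * nsq (C * ((-A - (starRingEnd ℂ a) • 1)⁻¹ * y)) = 0 := by
        linarith
      have hnz : nsq (C * ((-A - (starRingEnd ℂ a) • 1)⁻¹ * y)) = 0 := by
        rcases mul_eq_zero.mp h3 with h | h
        · exfalso; simp at h; linarith
        · exact h
      exact (nsq_eq_zero_iff _).mp hnz
    have hstep := step_scalar A hstab C a s ha hs y hCv
    have hind := ih ht x h1 s hs
    rw [hprod, hind, hstep, smul_smul]
    congr 1
    rw [List.map_cons, List.prod_cons]
    ring

end Stmt8Aux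

theorem stmt_8 {n d : ℕ}
    (A : Matrix (Fin n) (Fin n) ℂ)
    (hstab : ∀ z ∈ spectrum ℂ A, z.re < 0)
    (C : Matrix (Fin 1) (Fin n) ℂ)
    (hdiss : A + Aᴴ + Cᴴ * C = 0)
    (ρ : ℂ) (hρ : ‖ρ‖ = 1)
    (α : Fin d → ℂ) (hα : ∀ k, (α k).re < 0)
    (hdeg : d < n)
    (x : Matrix (Fin n) (Fin 1) ℂ) (hx : x ≠ 0)
    (hfix : x = (blaschkeTildeEvalM ρ α (-A))ᴴ * blaschkeTildeEvalM ρ α (-A) * x) :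
    blaschkeTildeEvalM ρ α (-A) * x ≠ 0 ∧
      ∀ s : ℂ, 0 < s.re →
        C * (s • (1 : Matrix (Fin n) (Fin n) ℂ) - A)⁻¹ * x =
          blaschkeEval ρ α s •
            (C * (s • (1 : Matrix (Fin n) (Fin n) ℂ) - A)⁻¹ *
              (blaschkeTildeEvalM ρ α (-A) * x)) := by
  classical
  set l : List ℂ := List.ofFn α with hl
  have hmemb : ∀ a ∈ l, a.re < 0 := by
    intro a hamem
    rw [hl, List.mem_ofFn] at hamem
    obtain ⟨k, rfl⟩ := hamem
    exact hα k
  set P : Matrix (Fin n) (Fin n) ℂ := (l.map (Stmt8Aux.Fm A)).prod with hP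
  have hBP : blaschkeTildeEvalM ρ α (-A) = (starRingEnd ℂ ρ) • P := by
    have hfun : (fun k : Fin d =>
        (-A + (starRingEnd ℂ) ((starRingEnd ℂ) (α k)) • (1 : Matrix (Fin n) (Fin n) ℂ)) *
          (-A - (starRingEnd ℂ) (α k) • 1)⁻¹) = Stmt8Aux.Fm A ∘ α := by
      funext k
      simp [Stmt8Aux.Fm, Function.comp]
    rw [blaschkeTildeEvalM, blaschkeEvalM, hP, hl, List.map_ofFn, hfun]
  have hρ1 : ρ * starRingEnd ℂ ρ = 1 := by
    rw [Complex.mul_conj, Complex.normSq_eq_norm_sq, hρ]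
    norm_num
  have hPP : (blaschkeTildeEvalM ρ α (-A))ᴴ * blaschkeTildeEvalM ρ α (-A) = Pᴴ * P := by
    rw [hBP, conjTranspose_smul, Matrix.smul_mul, Matrix.mul_smul, smul_smul]
    have : starRingEnd ℂ (starRingEnd ℂ ρ) * starRingEnd ℂ ρ = 1 := by
      rw [Complex.conj_conj]; exact hρ1
    rw [show (star (starRingEnd ℂ ρ) : ℂ) = starRingEnd ℂ (starRingEnd ℂ ρ) from rfl, this,
      one_smul]
  have hfix' : x = Pᴴ * P * x := by rw [← hPP]; exact hfix
  constructor
  · intro h0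
    apply hx
    rw [hfix, Matrix.mul_assoc, h0, Matrix.mul_zero]
  · intro s hs
    have hfix2 : Pᴴ * (P * x) = x := by rw [← Matrix.mul_assoc]; exact hfix'.symm
    have e : (P * x)ᴴ * (P * x) = xᴴ * x := by
      rw [conjTranspose_mul, Matrix.mul_assoc, hfix2]
    have hnorm : Stmt8Aux.nsq (P * x) = Stmt8Aux.nsq x := by
      have e2 := congrArg (fun M => M 0 0) e
      simp only [Stmt8Aux.entry_eq_nsq] at e2
      exact_mod_cast e2
    have hmain := Stmt8Aux.main A hstab C hdiss l hmemb x hnorm s hs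
    rw [hBP, Matrix.smul_mul, Matrix.mul_smul, hmain, smul_smul]
    congr 1
    rw [blaschkeEval, hl, List.map_ofFn, List.prod_ofFn]
    rw [mul_comm ρ _, mul_assoc, hρ1, mul_one]
    rfl
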